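/- Let A be an irreducible N×N matrix over ℝ ∪ {+∞} whose graph G(A) contains at least one circuit, and let λ be the minimum average circuit weight of G(A). Then there exists a finite vector v ∈ ℝ^N with min_j (A_{ij} + v_j) = λ + v_i for all i; that is, λ is a min-plus eigenvalue of A with a finite eigenvector. -/

import Mathlib

open scoped BigOperators

/-- Min-plus product of matrices over ℝ ∪ {+∞}: `(A ⊙ B) i j = min_k (A i k + B k j)`. -/
def mpMul {N : ℕ} (A B : Matrix (Fin N) (Fin N) (WithTop ℝ)) :
    Matrix (Fin N) (Fin N) (WithTop ℝ) :=
  fun i j => Finset.univ.inf fun k => A i k + B k j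

/-- The min-plus identity matrix: `0` on the diagonal, `+∞` elsewhere. -/
def mpId {N : ℕ} : Matrix (Fin N) (Fin N) (WithTop ℝ) :=
  fun i j => if i = j then 0 else ⊤

/-- Min-plus matrix powers. -/
def mpPow {N : ℕ} (A : Matrix (Fin N) (Fin N) (WithTop ℝ)) : ℕ → Matrix (Fin N) (Fin N) (WithTop ℝ)
  | 0 => mpId
  | k + 1 => mpMul A (mpPow A k)

/-- `IsWalk A l v j i` : `v` is a walk of length `l` from node `j` to node `i` in the
weighted digraph `G(A)`, where there is an edge from `b` to `a` whenever `A a b ≠ +∞`. -/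
def IsWalk {N : ℕ} (A : Matrix (Fin N) (Fin N) (WithTop ℝ)) (l : ℕ)
    (v : Fin (l + 1) → Fin N) (j i : Fin N) : Prop :=
  v 0 = j ∧ v (Fin.last l) = i ∧ ∀ t : Fin l, A (v t.succ) (v t.castSucc) ≠ ⊤

/-- The weight of a walk: the sum of the weights of its edges. -/
def walkWeight {N : ℕ} (A : Matrix (Fin N) (Fin N) (WithTop ℝ)) (l : ℕ)
    (v : Fin (l + 1) → Fin N) : WithTop ℝ :=
  ∑ t : Fin l, A (v t.succ) (v t.castSucc)

namespace MPAux

attribute [local instance] Classical.propDecidable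

variable {N : ℕ}

def NWalk (A : Matrix (Fin N) (Fin N) (WithTop ℝ)) (l : ℕ) (p : ℕ → Fin N)
    (j i : Fin N) : Prop :=
  p 0 = j ∧ p l = i ∧ ∀ t, t < l → A (p (t + 1)) (p t) ≠ ⊤

noncomputable def nW (A : Matrix (Fin N) (Fin N) (WithTop ℝ)) (l : ℕ) (p : ℕ → Fin N) : ℝ :=
  ∑ t ∈ Finset.range l, ((A (p (t + 1)) (p t)).untopD 0)

lemma coe_untop' {x : WithTop ℝ} (h : x ≠ ⊤) : ((x.untopD 0 : ℝ) : WithTop ℝ) = x := by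
  obtain ⟨y, rfl⟩ := WithTop.ne_top_iff_exists.mp h
  rfl

lemma NWalk_congr {A : Matrix (Fin N) (Fin N) (WithTop ℝ)} {l : ℕ} {p q : ℕ → Fin N}
    {j i : Fin N} (h : ∀ t ≤ l, p t = q t) (hw : NWalk A l p j i) : NWalk A l q j i := by
  obtain ⟨h0, hl, he⟩ := hw
  refine ⟨(h 0 (Nat.zero_le _)).symm ▸ h0, (h l le_rfl).symm ▸ hl, fun t ht => ?_⟩
  rw [← h t ht.le, ← h (t+1) ht]
  exact he t ht

lemma nW_congr {A : Matrix (Fin N) (Fin N) (WithTop ℝ)} {l : ℕ} {p q : ℕ → Fin N}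
    (h : ∀ t ≤ l, p t = q t) : nW A l p = nW A l q := by
  unfold nW
  refine Finset.sum_congr rfl fun t ht => ?_
  rw [Finset.mem_range] at ht
  rw [h t ht.le, h (t+1) ht]

lemma isWalk_to_NWalk {A : Matrix (Fin N) (Fin N) (WithTop ℝ)} {l : ℕ}
    {v : Fin (l + 1) → Fin N} {j i : Fin N} (h : IsWalk A l v j i) :
    NWalk A l (fun t => v ⟨min t l, Nat.lt_succ_of_le (Nat.min_le_right _ _)⟩) j i ∧
    walkWeight A l v
      = ((nW A l (fun t => v ⟨min t l, Nat.lt_succ_of_le (Nat.min_le_right _ _)⟩) : ℝ) : WithTop ℝ) := by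
  obtain ⟨h0, hl, he⟩ := h
  have key : ∀ t (ht : t < l),
      A (v ⟨min (t+1) l, Nat.lt_succ_of_le (Nat.min_le_right _ _)⟩)
        (v ⟨min t l, Nat.lt_succ_of_le (Nat.min_le_right _ _)⟩)
      = A (v (⟨t, ht⟩ : Fin l).succ) (v (⟨t, ht⟩ : Fin l).castSucc) := by
    intro t ht
    congr 1 <;> apply congrArg <;> apply Fin.ext <;> simp [Fin.val_succ] <;> omega
  constructor
  · refine ⟨?_, ?_, fun t ht => ?_⟩
    · simpa using h0
    · show v ⟨min l l, Nat.lt_succ_of_le (Nat.min_le_right _ _)⟩ = i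
      have : (⟨min l l, Nat.lt_succ_of_le (Nat.min_le_right _ _)⟩ : Fin (l+1)) = Fin.last l := by
        apply Fin.ext; simp [Fin.last]
      rw [this]; exact hl
    · rw [key t ht]; exact he ⟨t, ht⟩
  · unfold walkWeight nW
    rw [WithTop.coe_sum, ← Fin.sum_univ_eq_sum_range]
    refine Finset.sum_congr rfl fun t _ => ?_
    rw [key t t.isLt, coe_untop' (he ⟨t, t.isLt⟩)]

lemma NWalk_to_isWalk {A : Matrix (Fin N) (Fin N) (WithTop ℝ)} {l : ℕ} {p : ℕ → Fin N}
    {j i : Fin N} (h : NWalk A l p j i) :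
    IsWalk A l (fun t : Fin (l + 1) => p t) j i ∧
    walkWeight A l (fun t : Fin (l + 1) => p t) = ((nW A l p : ℝ) : WithTop ℝ) := by
  obtain ⟨h0, hl, he⟩ := h
  have key : ∀ t : Fin l, A (p ((t.succ : Fin (l+1)) : ℕ)) (p ((t.castSucc : Fin (l+1)) : ℕ))
      = A (p (t + 1)) (p t) := by
    intro t; simp [Fin.val_succ]
  constructor
  · refine ⟨by simpa using h0, by simpa using hl, fun t => ?_⟩
    rw [key t]; exact he t t.isLt
  · unfold walkWeight nW
    rw [WithTop.coe_sum, ← Fin.sum_univ_eq_sum_range]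
    refine Finset.sum_congr rfl fun t _ => ?_
    simp only [Fin.val_succ, Fin.coe_castSucc]
    exact (coe_untop' (he t t.isLt)).symm

lemma surgery {A : Matrix (Fin N) (Fin N) (WithTop ℝ)} {l a b : ℕ} {p : ℕ → Fin N}
    {j i : Fin N} (hw : NWalk A l p j i) (hab : a < b) (hbl : b ≤ l) (hpq : p a = p b) :
    NWalk A (b - a) (fun t => p (a + t)) (p a) (p a) ∧
    NWalk A (l - (b - a)) (fun t => if t ≤ a then p t else p (t + (b - a))) j i ∧
    nW A l p = nW A (l - (b - a)) (fun t => if t ≤ a then p t else p (t + (b - a)))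
      + nW A (b - a) (fun t => p (a + t)) := by
  obtain ⟨h0, hl, he⟩ := hw
  set d := b - a with hd
  set q : ℕ → Fin N := fun t => if t ≤ a then p t else p (t + d) with hq
  set e : ℕ → ℝ := fun t => (A (p (t + 1)) (p t)).untopD 0 with hee
  have had : a + d = b := by omega
  -- circuit values
  have hcv : ∀ t, p (a + (t + 1)) = p ((a + t) + 1) := fun t => congrArg p (by omega)
  have hcirc : NWalk A d (fun t => p (a + t)) (p a) (p a) := by
    refine ⟨congrArg p (by omega), ?_, fun t ht => ?_⟩
    · show p (a + d) = p a
      rw [had]; exact hpq.symm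
    · show A (p (a + (t + 1))) (p (a + t)) ≠ ⊤
      rw [hcv t]
      exact he (a + t) (by omega)
  -- q edge identification
  have hqv : ∀ t, t < l - d → (q (t + 1) = p ((if t < a then t else t + d) + 1)
      ∧ q t = p (if t < a then t else t + d)) := by
    intro t ht
    by_cases h1 : t < a
    · have h2 : t + 1 ≤ a := h1
      simp [hq, if_pos h2, if_pos h1.le, if_pos h1]
    · have h2 : ¬ (t + 1 ≤ a) := by omega
      simp only [hq, if_neg h2, if_neg h1]
      constructor
      · exact congrArg p (by omega)
      · by_cases h3 : t ≤ a
        · have h4 : t = a := by omega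
          rw [if_pos h3, h4, hpq]
          exact congrArg p (by omega)
        · rw [if_neg h3]
  have hqw : NWalk A (l - d) q j i := by
    refine ⟨?_, ?_, fun t ht => ?_⟩
    · show q 0 = j
      simp only [hq, if_pos (Nat.zero_le a)]; exact h0
    · show q (l - d) = i
      by_cases h3 : l - d ≤ a
      · have h4 : l = b := by omega
        simp only [hq, if_pos h3]
        have : l - d = a := by omega
        rw [this, hpq]
        exact (congrArg p (by omega : b = l)).trans hl
      · simp only [hq, if_neg h3]
        exact (congrArg p (by omega : l - d + d = l)).trans hl
    · obtain ⟨e1, e2⟩ := hqv t ht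
      rw [e1, e2]
      exact he _ (by split <;> omega)
  refine ⟨hcirc, hqw, ?_⟩
  -- weights
  have wc : nW A d (fun t => p (a + t)) = ∑ t ∈ Finset.Ico a b, e t := by
    rw [Finset.sum_Ico_eq_sum_range]
    unfold nW
    have : b - a = d := rfl
    rw [this]
    refine Finset.sum_congr rfl fun t _ => ?_
    show (A (p (a + (t + 1))) (p (a + t))).untopD 0 = e (a + t)
    rw [hcv t]
  have wq : nW A (l - d) q = (∑ t ∈ Finset.Ico 0 a, e t) + ∑ t ∈ Finset.Ico b l, e t := by
    unfold nW
    rw [Finset.range_eq_Ico, ← Finset.sum_Ico_consecutive _ (Nat.zero_le a) (by omega : a ≤ l - d)]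
    congr 1
    · refine Finset.sum_congr rfl fun t ht => ?_
      rw [Finset.mem_Ico] at ht
      obtain ⟨e1, e2⟩ := hqv t (by omega)
      rw [e1, e2, if_pos ht.2]
    · rw [Finset.sum_Ico_eq_sum_range, Finset.sum_Ico_eq_sum_range]
      have hcard : l - d - a = l - b := by omega
      rw [hcard]
      refine Finset.sum_congr rfl fun t ht => ?_
      rw [Finset.mem_range] at ht
      obtain ⟨e1, e2⟩ := hqv (a + t) (by omega)
      rw [e1, e2, if_neg (by omega)]
      show e (a + t + d) = e (b + t)
      congr 1
      omega
  have wp : nW A l p = ((∑ t ∈ Finset.Ico 0 a, e t) + ∑ t ∈ Finset.Ico b l, e t)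
      + ∑ t ∈ Finset.Ico a b, e t := by
    unfold nW
    rw [Finset.range_eq_Ico,
      ← Finset.sum_Ico_consecutive (fun t => e t) (Nat.zero_le a) (le_of_lt (lt_of_lt_of_le hab hbl)),
      ← Finset.sum_Ico_consecutive (fun t => e t) (le_of_lt hab) hbl]
    ring
  rw [wp, wq, wc]

lemma shorten {A : Matrix (Fin N) (Fin N) (WithTop ℝ)} {lam : ℝ}
    (hlb2 : ∀ (m : ℕ) (c : ℕ → Fin N) (i : Fin N), 1 ≤ m → NWalk A m c i i →
      (m : ℝ) * lam ≤ nW A m c) :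
    ∀ l (p : ℕ → Fin N) (j i : Fin N), NWalk A l p j i →
      ∃ l' p', l' < N ∧ NWalk A l' p' j i ∧
        nW A l' p' - l' * lam ≤ nW A l p - l * lam := by
  intro l
  induction l using Nat.strong_induction_on with
  | _ l IH =>
    intro p j i hw
    by_cases hlN : l < N
    · exact ⟨l, p, hlN, hw, le_rfl⟩
    · push_neg at hlN
      -- pigeonhole: p restricted to Fin (l+1) is not injective
      have hcard : Fintype.card (Fin N) < Fintype.card (Fin (l + 1)) := by
        simp; omega
      obtain ⟨x, y, hxy, hpe⟩ :=
        Fintype.exists_ne_map_eq_of_card_lt (fun t : Fin (l + 1) => p t) hcard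
      -- wlog x < y
      have main : ∀ (a b : ℕ), a < b → b ≤ l → p a = p b →
          ∃ l' p', l' < N ∧ NWalk A l' p' j i ∧
            nW A l' p' - l' * lam ≤ nW A l p - l * lam := by
        intro a b hab hbl hpq
        obtain ⟨hcirc, hqw, hsum⟩ := surgery hw hab hbl hpq
        set d := b - a with hd
        have hd1 : 1 ≤ d := by omega
        have hcl : (d : ℝ) * lam ≤ nW A d (fun t => p (a + t)) :=
          hlb2 d _ _ hd1 hcirc
        obtain ⟨l', p', hl'N, hw', hle⟩ := IH (l - d) (by omega) _ j i hqw
        refine ⟨l', p', hl'N, hw', hle.trans ?_⟩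
        have hld : ((l - d : ℕ) : ℝ) = (l : ℝ) - (d : ℝ) := by
          push_cast [Nat.cast_sub (by omega : d ≤ l)]; ring
        rw [hsum, hld]
        nlinarith [hcl]
      rcases lt_or_gt_of_ne hxy with h | h
      · exact main x y h (by omega) hpe
      · exact main y x h (by omega) hpe.symm

def gfun (s : Σ l : Fin N, (Fin (l.1 + 1) → Fin N)) : ℕ → Fin N :=
  fun t => s.2 ⟨min t s.1, Nat.lt_succ_of_le (Nat.min_le_right _ _)⟩

noncomputable def WS (A : Matrix (Fin N) (Fin N) (WithTop ℝ)) (η i : Fin N) :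
    Finset (Σ l : Fin N, (Fin (l.1 + 1) → Fin N)) :=
  Finset.univ.filter (fun s => NWalk A s.1.1 (gfun s) η i)

lemma mem_WS {A : Matrix (Fin N) (Fin N) (WithTop ℝ)} {η i : Fin N}
    {s : Σ l : Fin N, (Fin (l.1 + 1) → Fin N)} :
    s ∈ WS A η i ↔ NWalk A s.1.1 (gfun s) η i := by
  simp [WS]

noncomputable def gval (A : Matrix (Fin N) (Fin N) (WithTop ℝ)) (lam : ℝ)
    (s : Σ l : Fin N, (Fin (l.1 + 1) → Fin N)) : ℝ :=
  nW A s.1.1 (gfun s) - s.1.1 * lam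

lemma nW_succ (A : Matrix (Fin N) (Fin N) (WithTop ℝ)) (l : ℕ) (p : ℕ → Fin N) :
    nW A (l + 1) p = nW A l p + (A (p (l + 1)) (p l)).untopD 0 := by
  unfold nW; rw [Finset.sum_range_succ]

/-- package a short walk into an element of the sigma type -/
lemma exists_mem_WS {A : Matrix (Fin N) (Fin N) (WithTop ℝ)} {η i : Fin N} {l : ℕ}
    {p : ℕ → Fin N} (hl : l < N) (hw : NWalk A l p η i) {lam : ℝ} :
    ∃ s ∈ WS A η i, gval A lam s = nW A l p - l * lam := by
  refine ⟨⟨⟨l, hl⟩, fun t => p t⟩, ?_, ?_⟩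
  · rw [mem_WS]
    refine NWalk_congr (q := gfun ⟨⟨l, hl⟩, fun t => p t⟩) (fun t ht => ?_) hw
    show p t = p (min t l)
    rw [min_eq_left ht]
  · show nW A l (gfun _) - (l : ℝ) * lam = _
    congr 1
    refine (nW_congr (fun t ht => ?_)).symm
    show p t = p (min t l)
    rw [min_eq_left ht]

end MPAux

open MPAux in
/-- for an irreducible matrix `A` whose graph contains at least one circuit,
the minimum average circuit weight `lam` of `G(A)` is a min-plus eigenvalue of `A` with a
finite eigenvector. -/
theorem exists_finite_eigenvector_of_min_avg_circuit_weight {N : ℕ}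
    (A : Matrix (Fin N) (Fin N) (WithTop ℝ))
    (hirr : ∀ i j : Fin N, ∃ (l : ℕ) (p : Fin (l + 1) → Fin N), IsWalk A l p i j)
    (lam : ℝ)
    (hlb : ∀ (m : ℕ) (i : Fin N) (c : Fin (m + 1) → Fin N), 1 ≤ m → IsWalk A m c i i →
      (((m : ℝ) * lam : ℝ) : WithTop ℝ) ≤ walkWeight A m c)
    (hmin : ∃ (m : ℕ) (i : Fin N) (c : Fin (m + 1) → Fin N), 1 ≤ m ∧ IsWalk A m c i i ∧
      walkWeight A m c = (((m : ℝ) * lam : ℝ) : WithTop ℝ)) :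
    ∃ v : Fin N → ℝ, ∀ i : Fin N,
      Finset.univ.inf (fun j => A i j + (v j : WithTop ℝ)) = ((lam + v i : ℝ) : WithTop ℝ) := by

  classical
  -- translate the lower bound to NWalk form
  have hlb2 : ∀ (m : ℕ) (c : ℕ → Fin N) (i : Fin N), 1 ≤ m → NWalk A m c i i →
      (m : ℝ) * lam ≤ nW A m c := by
    intro m c i hm hw
    obtain ⟨hw', hww⟩ := NWalk_to_isWalk hw
    have := hlb m i _ hm hw'
    rw [hww] at this
    exact_mod_cast this
  -- translate the minimizing circuit
  obtain ⟨m0, η, c0, hm1, hc0w, hc0eq⟩ := hmin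
  obtain ⟨hcw, hcw2⟩ := isWalk_to_NWalk hc0w
  set cp : ℕ → Fin N := fun t => c0 ⟨min t m0, Nat.lt_succ_of_le (Nat.min_le_right _ _)⟩ with hcp
  have hcpeq : nW A m0 cp = (m0 : ℝ) * lam := by
    have : ((nW A m0 cp : ℝ) : WithTop ℝ) = (((m0 : ℝ) * lam : ℝ) : WithTop ℝ) := by
      rw [← hcw2, hc0eq]
    exact_mod_cast this
  -- nonemptiness of the short-walk finsets
  have hWne : ∀ i, (WS A η i).Nonempty := by
    intro i
    obtain ⟨l, pf, hpf⟩ := hirr η i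
    obtain ⟨hnw, -⟩ := isWalk_to_NWalk hpf
    obtain ⟨l', p', hl'N, hw', -⟩ := shorten hlb2 l _ η i hnw
    obtain ⟨s, hs, -⟩ := exists_mem_WS (lam := lam) hl'N hw'
    exact ⟨s, hs⟩
  set v : Fin N → ℝ := fun i => (WS A η i).inf' (hWne i) (gval A lam) with hv
  -- claim 1 : v i is a lower bound for adjusted weights of all walks from η to i
  have claim1 : ∀ (l : ℕ) (p : ℕ → Fin N) (i : Fin N), NWalk A l p η i →
      v i ≤ nW A l p - l * lam := by
    intro l p i hw
    obtain ⟨l', p', hl'N, hw', hle⟩ := shorten hlb2 l p η i hw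
    obtain ⟨s, hs, hgs⟩ := exists_mem_WS (lam := lam) hl'N hw'
    calc v i ≤ gval A lam s := Finset.inf'_le _ hs
    _ = nW A l' p' - l' * lam := hgs
    _ ≤ _ := hle
  -- attainment
  have attain : ∀ i, ∃ (l : ℕ) (p : ℕ → Fin N), l < N ∧ NWalk A l p η i ∧
      nW A l p - l * lam = v i := by
    intro i
    obtain ⟨s, hs, hseq⟩ := Finset.exists_mem_eq_inf' (hWne i) (gval A lam)
    exact ⟨s.1.1, gfun s, s.1.2, mem_WS.mp hs, hseq.symm⟩
  -- v η ≥ 0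
  have hvη : 0 ≤ v η := by
    apply Finset.le_inf'
    intro s hs
    have hw := mem_WS.mp hs
    rcases Nat.eq_zero_or_pos s.1.1 with h0 | h0
    · unfold gval
      rw [h0]
      simp [nW]
    · have := hlb2 s.1.1 (gfun s) η h0 hw
      unfold gval
      nlinarith
  refine ⟨v, fun i => ?_⟩
  apply le_antisymm
  · -- inf ≤ lam + v i : exhibit a good j
    -- get a walk from η to i ending with an edge (j, i) with nW = v i + l·lam and
    -- the "prefix bound" a + v j ≤ lam + v i
    have key : ∃ j : Fin N, A i j + ((v j : ℝ) : WithTop ℝ) ≤ ((lam + v i : ℝ) : WithTop ℝ) := by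
      by_cases hiη : i = η
      · -- use the minimizing circuit
        subst hiη
        refine ⟨cp (m0 - 1), ?_⟩
        have hpre : NWalk A (m0 - 1) cp i (cp (m0 - 1)) := by
          refine ⟨hcw.1, rfl, fun t ht => hcw.2.2 t (by omega)⟩
        have hvj := claim1 _ _ _ hpre
        have hedge : A (cp m0) (cp (m0 - 1)) ≠ ⊤ := by
          have := hcw.2.2 (m0 - 1) (by omega)
          rwa [(by omega : m0 - 1 + 1 = m0)] at this
        set x := A (cp m0) (cp (m0 - 1)) with hx
        set a : ℝ := x.untopD 0 with ha
        have hax : ((a : ℝ) : WithTop ℝ) = x := coe_untop' hedge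
        have hsplit : nW A m0 cp = nW A (m0 - 1) cp + a := by
          conv_lhs => rw [← (by omega : m0 - 1 + 1 = m0)]
          rw [nW_succ, (by omega : m0 - 1 + 1 = m0), ha, hx]
        have hAij : A i (cp (m0 - 1)) = ((a : ℝ) : WithTop ℝ) := by
          rw [hax, hx, hcw.2.1]
        rw [hAij, ← WithTop.coe_add, WithTop.coe_le_coe]
        have : (↑(m0 - 1) : ℝ) = (m0 : ℝ) - 1 := by
          push_cast [Nat.cast_sub (by omega : 1 ≤ m0)]; ring
        rw [this] at hvj
        nlinarith [hvj, hcpeq, hsplit, hvη]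
      · obtain ⟨l, p, hlN, hw, heq⟩ := attain i
        have hl1 : 1 ≤ l := by
          rcases Nat.eq_zero_or_pos l with h0 | h0
          · exfalso; apply hiη
            rw [← hw.2.1, h0, hw.1]
          · exact h0
        refine ⟨p (l - 1), ?_⟩
        have hpre : NWalk A (l - 1) p η (p (l - 1)) :=
          ⟨hw.1, rfl, fun t ht => hw.2.2 t (by omega)⟩
        have hvj := claim1 _ _ _ hpre
        have hedge : A (p l) (p (l - 1)) ≠ ⊤ := by
          have := hw.2.2 (l - 1) (by omega)
          rwa [(by omega : l - 1 + 1 = l)] at this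
        set x := A (p l) (p (l - 1)) with hx
        set a : ℝ := x.untopD 0 with ha
        have hax : ((a : ℝ) : WithTop ℝ) = x := coe_untop' hedge
        have hsplit : nW A l p = nW A (l - 1) p + a := by
          conv_lhs => rw [← (by omega : l - 1 + 1 = l)]
          rw [nW_succ, (by omega : l - 1 + 1 = l), ha, hx]
        have hAij : A i (p (l - 1)) = ((a : ℝ) : WithTop ℝ) := by
          rw [hax, hx, hw.2.1]
        rw [hAij, ← WithTop.coe_add, WithTop.coe_le_coe]
        have hcast : (↑(l - 1) : ℝ) = (l : ℝ) - 1 := by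
          push_cast [Nat.cast_sub hl1]; ring
        rw [hcast] at hvj
        nlinarith [hvj, heq]
    obtain ⟨j, hj⟩ := key
    exact le_trans (Finset.inf_le (Finset.mem_univ j)) hj
  · -- lam + v i ≤ every term
    apply Finset.le_inf
    intro j _
    by_cases hA : A i j = ⊤
    · rw [hA]; simp
    · set a : ℝ := (A i j).untopD 0 with ha
      have hax : ((a : ℝ) : WithTop ℝ) = A i j := coe_untop' hA
      obtain ⟨l, p, hlN, hw, heq⟩ := attain j
      set p2 : ℕ → Fin N := fun t => if t ≤ l then p t else i with hp2
      have hw2 : NWalk A (l + 1) p2 η i := by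
        refine ⟨?_, ?_, fun t ht => ?_⟩
        · show p2 0 = η
          simp only [hp2, if_pos (Nat.zero_le l)]; exact hw.1
        · show p2 (l + 1) = i
          simp only [hp2, if_neg (by omega : ¬ l + 1 ≤ l)]
        · rcases Nat.lt_or_ge t l with h1 | h1
          · have e1 : p2 (t + 1) = p (t + 1) := by
              simp only [hp2, if_pos (by omega : t + 1 ≤ l)]
            have e2 : p2 t = p t := by
              simp only [hp2, if_pos (by omega : t ≤ l)]
            rw [e1, e2]; exact hw.2.2 t h1
          · have h2 : t = l := by omega
            subst h2
            have e1 : p2 (t + 1) = i := by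
              simp only [hp2, if_neg (by omega : ¬ t + 1 ≤ t)]
            have e2 : p2 t = p t := by simp only [hp2, if_pos le_rfl]
            rw [e1, e2, hw.2.1]; exact hA
      have hsplit : nW A (l + 1) p2 = nW A l p + a := by
        unfold nW
        rw [Finset.sum_range_succ]
        congr 1
        · refine Finset.sum_congr rfl fun t ht => ?_
          rw [Finset.mem_range] at ht
          have e1 : p2 (t + 1) = p (t + 1) := by
            simp only [hp2, if_pos (by omega : t + 1 ≤ l)]
          have e2 : p2 t = p t := by
            simp only [hp2, if_pos (by omega : t ≤ l)]
          rw [e1, e2]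
        · have e1 : p2 (l + 1) = i := by
            simp only [hp2, if_neg (by omega : ¬ l + 1 ≤ l)]
          have e2 : p2 l = p l := by simp only [hp2, if_pos le_rfl]
          rw [e1, e2, hw.2.1, ha]
      have hvi := claim1 _ _ _ hw2
      rw [hsplit] at hvi
      rw [← hax, ← WithTop.coe_add, WithTop.coe_le_coe]
      push_cast at hvi
      nlinarith [hvi, heq]
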